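/- The group PSL(2,8) has order 504 and contains elements x, y, z with x of order 2, y of order 3, z of order 7, xyz = 1, and ⟨x, y⟩ = PSL(2,8). -/

import Mathlib

open Matrix MatrixGroups

set_option maxRecDepth 100000
set_option maxHeartbeats 4000000

inductive F8 : Type | e0 | e1 | e2 | e3 | e4 | e5 | e6 | e7
  deriving DecidableEq

instance : Fintype F8 where
  elems := {F8.e0, F8.e1, F8.e2, F8.e3, F8.e4, F8.e5, F8.e6, F8.e7}
  complete := fun x => by cases x <;> decide

namespace F8

def add : F8 → F8 → F8
  | e0, e0 => e0
  | e0, e1 => e1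
  | e0, e2 => e2
  | e0, e3 => e3
  | e0, e4 => e4
  | e0, e5 => e5
  | e0, e6 => e6
  | e0, e7 => e7
  | e1, e0 => e1
  | e1, e1 => e0
  | e1, e2 => e3
  | e1, e3 => e2
  | e1, e4 => e5
  | e1, e5 => e4
  | e1, e6 => e7
  | e1, e7 => e6
  | e2, e0 => e2
  | e2, e1 => e3
  | e2, e2 => e0
  | e2, e3 => e1
  | e2, e4 => e6
  | e2, e5 => e7
  | e2, e6 => e4
  | e2, e7 => e5
  | e3, e0 => e3
  | e3, e1 => e2
  | e3, e2 => e1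
  | e3, e3 => e0
  | e3, e4 => e7
  | e3, e5 => e6
  | e3, e6 => e5
  | e3, e7 => e4
  | e4, e0 => e4
  | e4, e1 => e5
  | e4, e2 => e6
  | e4, e3 => e7
  | e4, e4 => e0
  | e4, e5 => e1
  | e4, e6 => e2
  | e4, e7 => e3
  | e5, e0 => e5
  | e5, e1 => e4
  | e5, e2 => e7
  | e5, e3 => e6
  | e5, e4 => e1
  | e5, e5 => e0
  | e5, e6 => e3
  | e5, e7 => e2
  | e6, e0 => e6
  | e6, e1 => e7
  | e6, e2 => e4
  | e6, e3 => e5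
  | e6, e4 => e2
  | e6, e5 => e3
  | e6, e6 => e0
  | e6, e7 => e1
  | e7, e0 => e7
  | e7, e1 => e6
  | e7, e2 => e5
  | e7, e3 => e4
  | e7, e4 => e3
  | e7, e5 => e2
  | e7, e6 => e1
  | e7, e7 => e0

def mul : F8 → F8 → F8
  | e0, e0 => e0
  | e0, e1 => e0
  | e0, e2 => e0
  | e0, e3 => e0
  | e0, e4 => e0
  | e0, e5 => e0
  | e0, e6 => e0
  | e0, e7 => e0
  | e1, e0 => e0
  | e1, e1 => e1
  | e1, e2 => e2
  | e1, e3 => e3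
  | e1, e4 => e4
  | e1, e5 => e5
  | e1, e6 => e6
  | e1, e7 => e7
  | e2, e0 => e0
  | e2, e1 => e2
  | e2, e2 => e4
  | e2, e3 => e6
  | e2, e4 => e3
  | e2, e5 => e1
  | e2, e6 => e7
  | e2, e7 => e5
  | e3, e0 => e0
  | e3, e1 => e3
  | e3, e2 => e6
  | e3, e3 => e5
  | e3, e4 => e7
  | e3, e5 => e4
  | e3, e6 => e1
  | e3, e7 => e2
  | e4, e0 => e0
  | e4, e1 => e4
  | e4, e2 => e3
  | e4, e3 => e7
  | e4, e4 => e6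
  | e4, e5 => e2
  | e4, e6 => e5
  | e4, e7 => e1
  | e5, e0 => e0
  | e5, e1 => e5
  | e5, e2 => e1
  | e5, e3 => e4
  | e5, e4 => e2
  | e5, e5 => e7
  | e5, e6 => e3
  | e5, e7 => e6
  | e6, e0 => e0
  | e6, e1 => e6
  | e6, e2 => e7
  | e6, e3 => e1
  | e6, e4 => e5
  | e6, e5 => e3
  | e6, e6 => e2
  | e6, e7 => e4
  | e7, e0 => e0
  | e7, e1 => e7
  | e7, e2 => e5
  | e7, e3 => e2
  | e7, e4 => e1
  | e7, e5 => e6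
  | e7, e6 => e4
  | e7, e7 => e3

instance : Zero F8 := ⟨e0⟩
instance : One F8 := ⟨e1⟩
instance : Add F8 := ⟨add⟩
instance : Mul F8 := ⟨mul⟩
instance : Neg F8 := ⟨fun a => a⟩

instance : CommRing F8 where
  add := (· + ·)
  zero := 0
  neg := (- ·)
  mul := (· * ·)
  one := 1
  nsmul := nsmulRec
  zsmul := zsmulRec
  add_assoc := by decide
  zero_add := by decide
  add_zero := by decide
  add_comm := by decide
  neg_add_cancel := by decide
  mul_assoc := by decide
  one_mul := by decide
  mul_one := by decide
  zero_mul := by decide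
  mul_zero := by decide
  left_distrib := by decide
  right_distrib := by decide
  mul_comm := by decide

theorem isField : IsField F8 :=
  ⟨⟨e0, e1, by decide⟩, mul_comm, by decide⟩

noncomputable instance : Field F8 := isField.toField

end F8

open F8

abbrev SL8 := Matrix.SpecialLinearGroup (Fin 2) F8

instance : DecidableEq SL8 :=
  fun A B => decidable_of_iff (A.val = B.val) Subtype.ext_iff.symm

def X : SL8 := ⟨!![e0, e1; e1, e0], by decide⟩
def Y : SL8 := ⟨!![e0, e2; e5, e1], by decide⟩

theorem hX2 : X ^ 2 = 1 := by decide
theorem hXne : X ≠ 1 := by decide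
theorem hY3 : Y ^ 3 = 1 := by decide
theorem hYne : Y ≠ 1 := by decide
theorem hXY7 : (X * Y) ^ 7 = 1 := by decide
theorem hXYne : X * Y ≠ 1 := by decide
theorem hw9 : (X * Y * X * Y * Y) ^ 3 ^ (1 + 1) = 1 := by decide
theorem hw3 : ¬ (X * Y * X * Y * Y) ^ 3 ^ 1 = 1 := by decide

theorem cardSL : Nat.card SL8 = 504 := by
  rw [Nat.card_eq_fintype_card]; decide

/-- The unipotent upper triangular subgroup, as a hom from `Multiplicative F8`. -/
def u : Multiplicative F8 →* SL8 where
  toFun b := ⟨!![1, b.toAdd; 0, 1], by simp [Matrix.det_fin_two_of]⟩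
  map_one' := by apply Subtype.ext; decide
  map_mul' := by intro x y; apply Subtype.ext; revert x y; decide

theorem u_inj : Function.Injective u := by decide

noncomputable def H : Subgroup SL8 := Subgroup.closure {X, Y}

theorem hX : X ∈ H := Subgroup.subset_closure (by simp)
theorem hY : Y ∈ H := Subgroup.subset_closure (by simp)

theorem urange_le : u.range ≤ H := by
  have key : ∀ c : F8, u (Multiplicative.ofAdd c) ∈ H := by
    intro c
    cases c
    · exact (by decide : u (Multiplicative.ofAdd F8.e0) = 1) ▸ one_mem H
    · exact (by decide : u (Multiplicative.ofAdd F8.e1) = (X * Y * X * Y * Y * X * Y * X * Y * Y * X * Y * X * Y * Y * X)) ▸ (mul_mem (mul_mem (mul_mem (mul_mem (mul_mem (mul_mem (mul_mem (mul_mem (mul_mem (mul_mem (mul_mem (mul_mem (mul_mem (mul_mem (mul_mem (hX) hY) hX) hY) hY) hX) hY) hX) hY) hY) hX) hY) hX) hY) hY) hX)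
    · exact (by decide : u (Multiplicative.ofAdd F8.e2) = (Y * X * Y * Y * X * Y * X * Y * X * Y * Y * X * Y * Y * X * Y * X)) ▸ (mul_mem (mul_mem (mul_mem (mul_mem (mul_mem (mul_mem (mul_mem (mul_mem (mul_mem (mul_mem (mul_mem (mul_mem (mul_mem (mul_mem (mul_mem (mul_mem (hY) hX) hY) hY) hX) hY) hX) hY) hX) hY) hY) hX) hY) hY) hX) hY) hX)
    · exact (by decide : u (Multiplicative.ofAdd F8.e3) = (Y * X * Y * X * Y * X * Y * Y * X * Y * Y * X * Y * X * Y * Y * X * Y)) ▸ (mul_mem (mul_mem (mul_mem (mul_mem (mul_mem (mul_mem (mul_mem (mul_mem (mul_mem (mul_mem (mul_mem (mul_mem (mul_mem (mul_mem (mul_mem (mul_mem (mul_mem (hY) hX) hY) hX) hY) hX) hY) hY) hX) hY) hY) hX) hY) hX) hY) hY) hX) hY)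
    · exact (by decide : u (Multiplicative.ofAdd F8.e4) = (X * Y * Y * X * Y * X * Y * Y * X * Y * X)) ▸ (mul_mem (mul_mem (mul_mem (mul_mem (mul_mem (mul_mem (mul_mem (mul_mem (mul_mem (mul_mem (hX) hY) hY) hX) hY) hX) hY) hY) hX) hY) hX)
    · exact (by decide : u (Multiplicative.ofAdd F8.e5) = (Y * Y * X * Y * X * Y * X * Y * Y * X * Y * Y * X * Y)) ▸ (mul_mem (mul_mem (mul_mem (mul_mem (mul_mem (mul_mem (mul_mem (mul_mem (mul_mem (mul_mem (mul_mem (mul_mem (mul_mem (hY) hY) hX) hY) hX) hY) hX) hY) hY) hX) hY) hY) hX) hY)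
    · exact (by decide : u (Multiplicative.ofAdd F8.e6) = (Y * X * Y * X * Y * Y * X * Y * Y)) ▸ (mul_mem (mul_mem (mul_mem (mul_mem (mul_mem (mul_mem (mul_mem (mul_mem (hY) hX) hY) hX) hY) hY) hX) hY) hY)
    · exact (by decide : u (Multiplicative.ofAdd F8.e7) = (X * Y * X * Y * X * Y * Y * X * Y * X * Y * Y * X * Y * X * Y * Y * X * Y * Y * X)) ▸ (mul_mem (mul_mem (mul_mem (mul_mem (mul_mem (mul_mem (mul_mem (mul_mem (mul_mem (mul_mem (mul_mem (mul_mem (mul_mem (mul_mem (mul_mem (mul_mem (mul_mem (mul_mem (mul_mem (mul_mem (hX) hY) hX) hY) hX) hY) hY) hX) hY) hX) hY) hY) hX) hY) hX) hY) hY) hX) hY) hY) hX)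
  rintro g ⟨b, rfl⟩
  exact key b.toAdd

theorem Htop : H = ⊤ := by
  have h2 : Fact (Nat.Prime 2) := ⟨by norm_num⟩
  have h3 : Fact (Nat.Prime 3) := ⟨by norm_num⟩
  have h7 : Fact (Nat.Prime 7) := ⟨by norm_num⟩
  have hu8 : Nat.card u.range = 8 := by
    rw [← Nat.card_congr (MonoidHom.ofInjective u_inj).toEquiv,
      Nat.card_eq_fintype_card]
    decide
  have hdvd8 : (8 : ℕ) ∣ Nat.card H := hu8 ▸ Subgroup.card_dvd_of_le urange_le
  have hdvd9 : (9 : ℕ) ∣ Nat.card H := by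
    have hmem : X * Y * X * Y * Y ∈ H :=
      mul_mem (mul_mem (mul_mem (mul_mem hX hY) hX) hY) hY
    have : orderOf (⟨X * Y * X * Y * Y, hmem⟩ : H) = 9 := by
      rw [← orderOf_injective H.subtype H.subtype_injective]
      exact orderOf_eq_prime_pow hw3 hw9
    exact this ▸ orderOf_dvd_natCard _
  have hdvd7 : (7 : ℕ) ∣ Nat.card H := by
    have hmem : X * Y ∈ H := mul_mem hX hY
    have : orderOf (⟨X * Y, hmem⟩ : H) = 7 := by
      rw [← orderOf_injective H.subtype H.subtype_injective]
      exact orderOf_eq_prime hXY7 hXYne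
    exact this ▸ orderOf_dvd_natCard _
  have h504 : (504 : ℕ) ∣ Nat.card H := by
    have h72 : (72 : ℕ) ∣ Nat.card H :=
      (Nat.Coprime.mul_dvd_of_dvd_of_dvd (by norm_num) hdvd8 hdvd9)
    exact (Nat.Coprime.mul_dvd_of_dvd_of_dvd (by norm_num) h72 hdvd7)
  have hle : Nat.card H ∣ 504 := cardSL ▸ Subgroup.card_subgroup_dvd_card H
  exact Subgroup.eq_top_of_card_eq H ((Nat.dvd_antisymm hle h504).trans cardSL.symm)

/-- `PSL(2, 8)` has order `504` and has a `(2,3,7)`-generating vector: elements `x, y, z`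
of orders `2, 3, 7` with `x * y * z = 1` generating the whole group. -/
theorem psl_2_8_hurwitz :
    Nat.card (Matrix.ProjectiveSpecialLinearGroup (Fin 2) (GaloisField 2 3)) = 504 ∧
    ∃ x y z : Matrix.ProjectiveSpecialLinearGroup (Fin 2) (GaloisField 2 3),
      orderOf x = 2 ∧ orderOf y = 3 ∧ orderOf z = 7 ∧ x * y * z = 1 ∧
      Subgroup.closure ({x, y} :
        Set (Matrix.ProjectiveSpecialLinearGroup (Fin 2) (GaloisField 2 3))) = ⊤ := by
  classical
  set K := GaloisField 2 3 with hK
  have hcardK : Nat.card K = 8 := by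
    rw [GaloisField.card 2 3 (by norm_num)]
    norm_num
  have hKfin : Finite K := Nat.finite_of_card_ne_zero (by rw [hcardK]; norm_num)
  letI : Fintype K := Fintype.ofFinite K
  have hcards : Fintype.card F8 = Fintype.card K := by
    rw [← Nat.card_eq_fintype_card, ← Nat.card_eq_fintype_card, hcardK,
      Nat.card_eq_fintype_card]
    decide
  let φ : F8 ≃+* K := FiniteField.ringEquivOfCardEq hcards
  -- iso of special linear groups
  let e1 : SL8 ≃* Matrix.SpecialLinearGroup (Fin 2) K :=
    { toFun := Matrix.SpecialLinearGroup.map (φ : F8 →+* K)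
      invFun := Matrix.SpecialLinearGroup.map (φ.symm : K →+* F8)
      left_inv := fun A => Subtype.ext <| by
        ext i j
        exact φ.symm_apply_apply (A i j)
      right_inv := fun A => Subtype.ext <| by
        ext i j
        exact φ.apply_symm_apply (A i j)
      map_mul' := map_mul _ }
  -- the center of `SL(2, K)` is trivial in characteristic 2
  have hcent : Subgroup.center (Matrix.SpecialLinearGroup (Fin 2) K) = ⊥ := by
    rw [eq_bot_iff]
    intro A hA
    obtain ⟨r, hr, hscal⟩ := Matrix.SpecialLinearGroup.mem_center_iff.mp hA
    have hr2 : r * r = 1 := by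
      have : r ^ 2 = 1 := by simpa using hr
      rwa [sq] at this
    have hr1 : r = 1 := by
      rcases mul_self_eq_one_iff.mp hr2 with h | h
      · exact h
      · rw [h]; exact CharTwo.neg_eq 1
    rw [Subgroup.mem_bot]
    apply Subtype.ext
    rw [← hscal, hr1]
    simp
  let e2 : Matrix.ProjectiveSpecialLinearGroup (Fin 2) K ≃*
      Matrix.SpecialLinearGroup (Fin 2) K :=
    (QuotientGroup.quotientMulEquivOfEq hcent).trans QuotientGroup.quotientBot
  let e : SL8 ≃* Matrix.ProjectiveSpecialLinearGroup (Fin 2) K := e1.trans e2.symm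
  have h2 : Fact (Nat.Prime 2) := ⟨by norm_num⟩
  have h3 : Fact (Nat.Prime 3) := ⟨by norm_num⟩
  have h7 : Fact (Nat.Prime 7) := ⟨by norm_num⟩
  refine ⟨by rw [← Nat.card_congr e.toEquiv, cardSL], e X, e Y, e ((X * Y)⁻¹), ?_, ?_, ?_, ?_, ?_⟩
  · rw [show e X = e.toMonoidHom X from rfl,
      orderOf_injective e.toMonoidHom e.injective]
    exact orderOf_eq_prime hX2 hXne
  · rw [show e Y = e.toMonoidHom Y from rfl,
      orderOf_injective e.toMonoidHom e.injective]
    exact orderOf_eq_prime hY3 hYne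
  · rw [show e ((X * Y)⁻¹) = e.toMonoidHom ((X * Y)⁻¹) from rfl,
      orderOf_injective e.toMonoidHom e.injective, orderOf_inv]
    exact orderOf_eq_prime hXY7 hXYne
  · rw [← _root_.map_mul, ← _root_.map_mul, mul_inv_cancel, _root_.map_one]
  · have hmap : Subgroup.map e.toMonoidHom H = Subgroup.closure ({e X, e Y} : Set _) := by
      rw [show H = Subgroup.closure {X, Y} from rfl, MonoidHom.map_closure, Set.image_pair]
      rfl
    rw [← hmap, Htop, Subgroup.map_top_of_surjective _ e.surjective]
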